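/- Let X be a topological space in which every Λ-set is open. If f is lower semi-contra-continuous, g is upper semi-contra-continuous, g ≤ f, and X is extremally disconnected, then there exists a contra-continuous function h on X with g ≤ h ≤ f. -/
import Mathlib


open Set

variable {X : Type*} [TopologicalSpace X]

/-- The kernel `A^Λ`: intersection of all open sets containing `A`. -/
def kernelSet (A : Set X) : Set X := ⋂₀ {O | IsOpen O ∧ A ⊆ O}

/-- The V-hull `A^V`: union of all closed sets contained in `A`. -/
def vHull (A : Set X) : Set X := ⋃₀ {F | IsClosed F ∧ F ⊆ A}

/-- An F_σ set: a countable union of closed sets. -/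
def IsFsigma (A : Set X) : Prop :=
  ∃ S : Set (Set X), S.Countable ∧ (∀ F ∈ S, IsClosed F) ∧ A = ⋃₀ S

theorem insertion_contraContinuous_extremallyDisconnected
    [ExtremallyDisconnected X]
    (hΛ : ∀ A : Set X, A = kernelSet A → IsOpen A)
    (f g : X → ℝ)
    (hf : ∀ t : ℝ, IsClosed (f ⁻¹' Set.Ioi t))
    (hg : ∀ t : ℝ, IsClosed (g ⁻¹' Set.Iio t))
    (hgf : g ≤ f) :
    ∃ h : X → ℝ, (∀ U : Set ℝ, IsOpen U → IsClosed (h ⁻¹' U)) ∧ g ≤ h ∧ h ≤ f := by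
  -- arbitrary intersections of open sets are open
  have inter_open : ∀ S : Set (Set X), (∀ O ∈ S, IsOpen O) → IsOpen (⋂₀ S) := by
    intro S hS
    apply hΛ
    apply Subset.antisymm
    · intro x hx O hO
      exact hO.2 hx
    · intro x hx O hO
      exact hx O ⟨hS O hO, fun z hz => hz O hO⟩
  -- arbitrary unions of closed sets are closed
  have union_closed : ∀ S : Set (Set X), (∀ F ∈ S, IsClosed F) → IsClosed (⋃₀ S) := by
    intro S hS
    rw [← isOpen_compl_iff, Set.compl_sUnion]
    apply inter_open
    rintro O ⟨F, hF, rfl⟩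
    exact (hS F hF).isOpen_compl
  -- the clopen atom of a point
  set Q : X → Set X := fun x => ⋂₀ {C | IsClopen C ∧ x ∈ C} with hQdef
  have memQ : ∀ x, x ∈ Q x := fun x C hC => hC.2
  have Qclosed : ∀ x, IsClosed (Q x) :=
    fun x => isClosed_sInter fun C hC => hC.1.isClosed
  have Qsymm : ∀ x y, y ∈ Q x → x ∈ Q y := by
    intro x y hy C hC
    by_contra hx
    exact hy Cᶜ ⟨hC.1.compl, hx⟩ hC.2
  have Qtrans : ∀ x y z, y ∈ Q x → z ∈ Q y → z ∈ Q x := by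
    intro x y z hyx hzy C hC
    exact hzy C ⟨hC.1, hyx C hC⟩
  -- the key inequality across an atom
  have key : ∀ x y, y ∈ Q x → g x ≤ f y := by
    intro x y hy
    by_contra hlt
    push_neg at hlt
    obtain ⟨t, ht1, ht2⟩ := exists_between hlt
    -- g ⁻¹' Iic t is closed
    have hIic : IsClosed (g ⁻¹' Iic t) := by
      have : g ⁻¹' Iic t = ⋂ n : ℕ, g ⁻¹' Iio (t + 1 / (n + 1)) := by
        ext z
        simp only [mem_preimage, mem_Iic, mem_iInter, mem_Iio]
        constructor
        · intro hz n
          have : (0:ℝ) < 1 / (n + 1) := by positivity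
          linarith
        · intro hz
          by_contra hgt
          push_neg at hgt
          obtain ⟨n, hn⟩ := exists_nat_one_div_lt (sub_pos.mpr hgt)
          have := hz n
          have : (1:ℝ) / (n + 1) < g z - t := hn
          linarith [hz n]
      rw [this]
      exact isClosed_iInter fun n => hg _
    have hGopen : IsOpen (g ⁻¹' Ioi t) := by
      have : g ⁻¹' Ioi t = (g ⁻¹' Iic t)ᶜ := by
        ext z; simp [not_le]
      rw [this]
      exact hIic.isOpen_compl
    set C := closure (g ⁻¹' Ioi t) with hC
    have hCopen : IsOpen C := ExtremallyDisconnected.open_closure _ hGopen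
    have hCsub : C ⊆ f ⁻¹' Ioi t :=
      closure_minimal (fun z hz => lt_of_lt_of_le hz (hgf z)) (hf t)
    have hxC : x ∈ C := subset_closure ht2
    have hyC : y ∈ C := hy C ⟨⟨isClosed_closure, hCopen⟩, hxC⟩
    exact absurd (hCsub hyC) (not_lt.mpr ht1.le)
  -- define h
  have hbdd : ∀ x, BddAbove (g '' Q x) := by
    intro x
    refine ⟨f x, ?_⟩
    rintro _ ⟨y, hy, rfl⟩
    exact key y x (Qsymm x y hy)
  have hne : ∀ x, (g '' Q x).Nonempty := fun x => ⟨g x, x, memQ x, rfl⟩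
  refine ⟨fun x => sSup (g '' Q x), ?_, ?_, ?_⟩
  · -- contra-continuity: preimage of anything is closed
    intro U _
    set h : X → ℝ := fun x => sSup (g '' Q x) with hh
    have Qeq : ∀ x y, y ∈ Q x → Q y = Q x := by
      intro x y hy
      ext z
      exact ⟨fun hz => Qtrans x y z hy hz, fun hz => Qtrans y x z (Qsymm x y hy) hz⟩
    have hconst : ∀ x y, y ∈ Q x → h y = h x := by
      intro x y hy
      simp only [hh, Qeq x y hy]
    have : h ⁻¹' U = ⋃₀ (Q '' (h ⁻¹' U)) := by
      ext z
      constructor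
      · intro hz
        exact ⟨Q z, ⟨z, hz, rfl⟩, memQ z⟩
      · rintro ⟨_, ⟨w, hw, rfl⟩, hzw⟩
        have : h z = h w := hconst w z hzw
        simpa [mem_preimage, this] using hw
    rw [this]
    apply union_closed
    rintro F ⟨w, _, rfl⟩
    exact Qclosed w
  · intro x
    exact le_csSup (hbdd x) ⟨x, memQ x, rfl⟩
  · intro x
    apply csSup_le (hne x)
    rintro _ ⟨y, hy, rfl⟩
    exact key y x (Qsymm x y hy)
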